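/- In the Cantor dyadic group FMRA setting, suppose the set E_m = {ω ∈ Δ₂ : m(σω) = m(σω+0.1) = 0} has measure zero. If m' ∈ L²(D) is any Λ-periodic function with φ̂(ρω) = m'(ω)φ̂(ω) a.e., then E_{m'} = {ω ∈ Δ₂ : m'(σω) = m'(σω+0.1) = 0} also has measure zero. -/

import Mathlib

/-!
Common setting: the Vilenkin group `Vil p` (sequences `ℤ → ZMod p` vanishing
below some index), its discrete subgroup `H`, the neighbourhood `U`,
the shift automorphism, the generalized characters, and a bundled structure
`VilenkinSetting` carrying the Haar measures on the group and on its dual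
(realized on the same underlying sequence space), the Plancherel (Fourier)
transform, translations and the dilation operator, with their standard
compatibility properties.
-/

open MeasureTheory Filter Topology
open scoped ENNReal NNReal Pointwise Classical ComplexConjugate

noncomputable section

/-- The underlying additive group of the Vilenkin group: sequences
`x : ℤ → ZMod p` with `x j = 0` for all `j` below some `k = k(x)`. -/
def vilCarrier (p : ℕ) : AddSubgroup (ℤ → ZMod p) where
  carrier := {x | ∃ k : ℤ, ∀ j < k, x j = 0}
  zero_mem' := ⟨0, fun _ _ => rfl⟩
  add_mem' := by
    rintro a b ⟨k, hk⟩ ⟨l, hl⟩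
    refine ⟨min k l, fun j hj => ?_⟩
    have h1 := hk j (lt_of_lt_of_le hj (min_le_left _ _))
    have h2 := hl j (lt_of_lt_of_le hj (min_le_right _ _))
    simp_all [Pi.add_apply]
  neg_mem' := by
    rintro a ⟨k, hk⟩
    exact ⟨k, fun j hj => by simp [hk j hj]⟩

/-- The Vilenkin group (as a type). The dual group `G̃*` is realized on the
same type of sequences. -/
abbrev Vil (p : ℕ) : Type := vilCarrier p

/-- The discrete subgroup `H = {x : x_j = 0 for j > 0}` of the Vilenkin group.
On the dual side the same subgroup realizes the annihilator `H⊥`. -/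
def Hsub (p : ℕ) : AddSubgroup (Vil p) where
  carrier := {x | ∀ j > 0, (x : ℤ → ZMod p) j = 0}
  zero_mem' := fun _ _ => rfl
  add_mem' := by
    intro a b ha hb j hj
    simp [ha j hj, hb j hj]
  neg_mem' := by
    intro a ha j hj
    simp [ha j hj]

/-- The subgroup-neighbourhoods `U_l = {x : x_j = 0 for j ≤ l}` (as sets). -/
def UsetL (p : ℕ) (l : ℤ) : Set (Vil p) := {x | ∀ j ≤ l, (x : ℤ → ZMod p) j = 0}

/-- `U = U_0`; on the dual side this realizes `U*`. -/
def Uset (p : ℕ) : Set (Vil p) := UsetL p 0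

/-- The topology of the Vilenkin group, generated by cosets of the `U_l`. -/
instance (p : ℕ) : TopologicalSpace (Vil p) :=
  TopologicalSpace.generateFrom {s | ∃ (x : Vil p) (l : ℤ), s = (x + ·) '' UsetL p l}

/-- The Borel σ-algebra on the Vilenkin group. -/
instance (p : ℕ) : MeasurableSpace (Vil p) := borel (Vil p)

/-- The shift automorphism `A` (resp. `B` on the dual side): `(Ax)_j = x_{j+1}`. -/
def shiftMap (p : ℕ) : Vil p ≃+ Vil p where
  toFun x := ⟨fun j => (x : ℤ → ZMod p) (j + 1), by
    obtain ⟨k, hk⟩ := x.2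
    exact ⟨k - 1, fun j hj => hk _ (by omega)⟩⟩
  invFun x := ⟨fun j => (x : ℤ → ZMod p) (j - 1), by
    obtain ⟨k, hk⟩ := x.2
    exact ⟨k + 1, fun j hj => hk _ (by omega)⟩⟩
  left_inv x :=
    Subtype.ext (funext fun j =>
      congrArg (x : ℤ → ZMod p) (show j - 1 + 1 = j by omega))
  right_inv x :=
    Subtype.ext (funext fun j =>
      congrArg (x : ℤ → ZMod p) (show j + 1 - 1 = j by omega))
  map_add' x y := by
    apply Subtype.ext
    funext j
    rfl

/-- The element `0.ζ` of the (dual) Vilenkin group: coordinate `ζ` in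
position `1` and `0` elsewhere. -/
def dotEl (p : ℕ) (ζ : ZMod p) : Vil p :=
  ⟨fun j => if j = 1 then ζ else 0, ⟨1, fun j hj => if_neg (by omega)⟩⟩

/-- The generalized Walsh character pairing
`χ(x, ω) = exp((2πi/p) Σ_j x_j ω_{1-j})`. -/
def vilChar (p : ℕ) (x ω : Vil p) : ℂ :=
  Complex.exp (2 * Real.pi * Complex.I *
    (((∑ᶠ j : ℤ, (x : ℤ → ZMod p) j * (ω : ℤ → ZMod p) (1 - j)).val : ℂ) / (p : ℂ)))

/-- A bundled Vilenkin-group setting: Haar measures `μ` (on `G̃`) and `ν`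
(on the dual `G̃*`, realized on the same sequence space), normalized so that
`U` (resp. `U*`) has measure one, the Plancherel/Fourier transform `F`,
the translation operators `T`, the dilation operator `Dil`, and their
standard compatibility properties. -/
structure VilenkinSetting (p : ℕ) where
  /-- Haar measure on the Vilenkin group `G̃`. -/
  μ : Measure (Vil p)
  /-- Haar measure on the dual group `G̃*`. -/
  ν : Measure (Vil p)
  μ_inv : ∀ g : Vil p, MeasurePreserving (fun x => x + g) μ μ
  ν_inv : ∀ g : Vil p, MeasurePreserving (fun x => x + g) ν ν
  μ_U : μ (Uset p) = 1
  ν_U : ν (Uset p) = 1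
  /-- The Fourier (Plancherel) transform `f ↦ f̂`, a unitary from `L²(G̃)`
  onto `L²(G̃*)`. -/
  F : Lp ℂ 2 μ ≃ₗᵢ[ℂ] Lp ℂ 2 ν
  /-- The translation operators `T_g f = f(· ⊖ g)`. -/
  T : Vil p → (Lp ℂ 2 μ ≃ₗᵢ[ℂ] Lp ℂ 2 μ)
  T_apply : ∀ (g : Vil p) (f : Lp ℂ 2 μ),
    (T g f : Vil p → ℂ) =ᵐ[μ] fun x => f (x - g)
  F_T : ∀ h ∈ Hsub p, ∀ f : Lp ℂ 2 μ,
    (F (T h f) : Vil p → ℂ) =ᵐ[ν] fun ω => vilChar p h ω * F f ω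
  /-- The dilation operator `(𝔻f)(x) = p^{1/2} f(Ax)`. -/
  Dil : Lp ℂ 2 μ ≃ₗᵢ[ℂ] Lp ℂ 2 μ
  Dil_apply : ∀ f : Lp ℂ 2 μ,
    (Dil f : Vil p → ℂ) =ᵐ[μ] fun x => (Real.sqrt p : ℂ) * f (shiftMap p x)
  F_Dil : ∀ f : Lp ℂ 2 μ,
    (F (Dil f) : Vil p → ℂ) =ᵐ[ν] fun ω =>
      ((Real.sqrt p)⁻¹ : ℂ) * F f ((shiftMap p).symm ω)

namespace VilenkinSetting

variable {p : ℕ} (S : VilenkinSetting p)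

/-- The principal shift-invariant space `⟨φ⟩`, the closed linear span of the
translates `T_h φ`, `h ∈ H`. -/
def pSIS (φ : Lp ℂ 2 S.μ) : Submodule ℂ (Lp ℂ 2 S.μ) :=
  (Submodule.span ℂ (Set.range fun h : Hsub p => S.T h φ)).topologicalClosure

/-- Periodization of a function on the dual group:
`Σ_{h ∈ H⊥} |g(ω ⊕ h)|²` (valued in `ℝ≥0∞`). -/
def perF (g : Vil p → ℂ) (ω : Vil p) : ℝ≥0∞ :=
  ∑' h : Hsub p, (‖g (ω + (h : Vil p))‖₊ : ℝ≥0∞) ^ 2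

/-- The periodization function `P_φ(ω) = Σ_{h ∈ H⊥} |φ̂(ω ⊕ h)|²`. -/
def Pper (φ : Lp ℂ 2 S.μ) (ω : Vil p) : ℝ≥0∞ :=
  perF (S.F φ) ω

/-- `E_φ = supp P_φ`. -/
def Eset (φ : Lp ℂ 2 S.μ) : Set (Vil p) := {ω | S.Pper φ ω ≠ 0}

/-- `V_φ = {ω ∈ U* : φ̂_{‖ω} ≠ 0}`. -/
def Vset (φ : Lp ℂ 2 S.μ) : Set (Vil p) :=
  {ω ∈ Uset p | ∃ h ∈ Hsub p, S.F φ (ω + h) ≠ 0}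

/-- The spectrum `η(𝕊) = {ω ∈ U* : 𝕊̂_{‖ω} ≠ {0}}` of a subspace
`𝕊 ⊆ L²(G̃)`. -/
def spec (V : Submodule ℂ (Lp ℂ 2 S.μ)) : Set (Vil p) :=
  {ω ∈ Uset p | ∃ f ∈ V, ∃ h ∈ Hsub p, S.F f (ω + h) ≠ 0}

/-- The quantity `Σ_{h∈H} |⟨f, T_h φ⟩|²` appearing in the frame conditions. -/
def frameSum (φ f : Lp ℂ 2 S.μ) : ℝ :=
  ∑' h : Hsub p, ‖(inner ℂ f (S.T h φ) : ℂ)‖ ^ 2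

/-- `(T_h φ)_{h∈H}` is a Bessel sequence with some bound `b > 0`. -/
def IsBessel (φ : Lp ℂ 2 S.μ) : Prop :=
  ∃ b : ℝ, 0 < b ∧ ∀ f : Lp ℂ 2 S.μ, S.frameSum φ f ≤ b * ‖f‖ ^ 2

/-- `(T_h φ)_{h∈H}` is a frame for the closed subspace `W` with bounds
`a ≤ b`: the translates span `W` and the frame inequalities hold on `W`. -/
def IsFrameFor (φ : Lp ℂ 2 S.μ) (W : Submodule ℂ (Lp ℂ 2 S.μ)) (a b : ℝ) : Prop :=
  S.pSIS φ = W ∧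
    ∀ f ∈ W, a * ‖f‖ ^ 2 ≤ S.frameSum φ f ∧ S.frameSum φ f ≤ b * ‖f‖ ^ 2

/-- `(T_h φ)_{h∈H}` is a Parseval frame for the closed subspace `W`. -/
def IsParsevalFrameFor (φ : Lp ℂ 2 S.μ) (W : Submodule ℂ (Lp ℂ 2 S.μ)) : Prop :=
  S.pSIS φ = W ∧ ∀ f ∈ W, S.frameSum φ f = ‖f‖ ^ 2

/-- The common part of the definitions of MRA and FMRA: a nested sequence of
closed subspaces, compatible with the dilation, with dense union and trivial
intersection. -/
def IsLadder (V : ℤ → Submodule ℂ (Lp ℂ 2 S.μ)) : Prop :=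
  (∀ j, IsClosed (V j : Set (Lp ℂ 2 S.μ))) ∧
  (∀ j, V j ≤ V (j + 1)) ∧
  (∀ j, ∀ f : Lp ℂ 2 S.μ, f ∈ V j ↔ S.Dil f ∈ V (j + 1)) ∧
  Dense (⋃ j : ℤ, (V j : Set (Lp ℂ 2 S.μ))) ∧
  (∀ f : Lp ℂ 2 S.μ, (∀ j : ℤ, f ∈ V j) → f = 0)

/-- `(V_j)` is an MRA with scaling function `φ`: the translates of `φ` form
an orthonormal basis of `V₀`. -/
def IsMRA (V : ℤ → Submodule ℂ (Lp ℂ 2 S.μ)) (φ : Lp ℂ 2 S.μ) : Prop :=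
  S.IsLadder V ∧ φ ∈ V 0 ∧ S.pSIS φ = V 0 ∧
    Orthonormal ℂ (fun h : Hsub p => S.T h φ)

/-- `(V_j)` is an FMRA with scaling function `φ` and frame bounds `a ≤ b`. -/
def IsFMRAWith (V : ℤ → Submodule ℂ (Lp ℂ 2 S.μ)) (φ : Lp ℂ 2 S.μ) (a b : ℝ) : Prop :=
  S.IsLadder V ∧ φ ∈ V 0 ∧ 0 < a ∧ a ≤ b ∧ S.IsFrameFor φ (V 0) a b

/-- `(V_j)` is an FMRA with scaling function `φ`. -/
def IsFMRA (V : ℤ → Submodule ℂ (Lp ℂ 2 S.μ)) (φ : Lp ℂ 2 S.μ) : Prop :=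
  ∃ a b : ℝ, S.IsFMRAWith V φ a b

/-- `(V_j)` is a Parseval FMRA with scaling function `φ`. -/
def IsParsevalFMRA (V : ℤ → Submodule ℂ (Lp ℂ 2 S.μ)) (φ : Lp ℂ 2 S.μ) : Prop :=
  S.IsLadder V ∧ φ ∈ V 0 ∧ S.IsParsevalFrameFor φ (V 0)

/-- `m` is an `H⊥`-periodic function belonging to `L²(U*)` (extended
`H⊥`-periodically to the whole dual group). -/
def IsFilter (m : Vil p → ℂ) : Prop :=
  (∀ ω : Vil p, ∀ h ∈ Hsub p, m (ω + h) = m ω) ∧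
    MemLp m 2 (S.ν.restrict (Uset p))

/-- The bracket `[g₁, g₂](ω) = Σ_{h∈H⊥} g₁(ω ⊕ h) conj (g₂(ω ⊕ h))`. -/
def brkt (g₁ g₂ : Vil p → ℂ) (ω : Vil p) : ℂ :=
  ∑' h : Hsub p, g₁ (ω + (h : Vil p)) * conj (g₂ (ω + (h : Vil p)))

end VilenkinSetting

/-! ### Additional notions used in the Cantor-dyadic-group (p = 2) setting -/

/-- `Λ₁ = {n ∈ Λ : σ n ∈ Λ}`. -/
def Lam1 (p : ℕ) : Set (Vil p) :=
  {n | n ∈ Hsub p ∧ (shiftMap p).symm n ∈ Hsub p}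

/-- `Λ ∖ Λ₁`. -/
def LamO (p : ℕ) : Set (Vil p) := (Hsub p : Set (Vil p)) \ Lam1 p

namespace VilenkinSetting

variable {p : ℕ} (S : VilenkinSetting p)

/-- `Σ_{n ∈ s} |φ̂(σ(ω + n))|²` for a subset `s` of the lattice. -/
def sumShift (φ : Lp ℂ 2 S.μ) (s : Set (Vil p)) (ω : Vil p) : ℝ≥0∞ :=
  ∑' n : s, (‖S.F φ ((shiftMap p).symm (ω + (n : Vil p)))‖₊ : ℝ≥0∞) ^ 2

/-- `Δ₂ = {ω ∈ D : Σ_{n∈Λ₁}|φ̂(σ(ω+n))|² ≠ 0 and Σ_{n∈Λ∖Λ₁}|φ̂(σ(ω+n))|² ≠ 0}`. -/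
def Delta2 (φ : Lp ℂ 2 S.μ) : Set (Vil p) :=
  {ω ∈ Uset p | S.sumShift φ (Lam1 p) ω ≠ 0 ∧ S.sumShift φ (LamO p) ω ≠ 0}

/-- `Δ₁`: exactly one of the two partial periodizations is nonzero. -/
def Delta1 (φ : Lp ℂ 2 S.μ) : Set (Vil p) :=
  {ω ∈ Uset p |
    (S.sumShift φ (Lam1 p) ω ≠ 0 ∧ S.sumShift φ (LamO p) ω = 0) ∨
    (S.sumShift φ (Lam1 p) ω = 0 ∧ S.sumShift φ (LamO p) ω ≠ 0)}

/-- The blocked set `E = {ω ∈ Δ₂ : m(σω) = m(σω + 0.1) = 0}`. -/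
def blockedSet (φ : Lp ℂ 2 S.μ) (m : Vil p → ℂ) : Set (Vil p) :=
  {ω ∈ S.Delta2 φ |
    m ((shiftMap p).symm ω) = 0 ∧ m ((shiftMap p).symm ω + dotEl p 1) = 0}

/-- The spectrum `η(V₀) = {ω ∈ D : Σ_{n∈Λ}|φ̂(ω+n)|² ≠ 0}` of `V₀ = ⟨φ⟩`. -/
def etaV0 (φ : Lp ℂ 2 S.μ) : Set (Vil p) := {ω ∈ Uset p | S.Pper φ ω ≠ 0}

/-- `W₀`, the orthogonal complement of `V₀` in `V₁`. -/
def Wcompl (V : ℤ → Submodule ℂ (Lp ℂ 2 S.μ)) : Submodule ℂ (Lp ℂ 2 S.μ) :=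
  V 1 ⊓ (V 0)ᗮ

/-- Integer powers `𝔻^j` of the dilation operator. -/
def dilZ (j : ℤ) (f : Lp ℂ 2 S.μ) : Lp ℂ 2 S.μ :=
  if 0 ≤ j then (fun g => S.Dil g)^[j.toNat] f
  else (fun g => S.Dil.symm g)^[(-j).toNat] f

end VilenkinSetting

namespace VilenkinSetting

/-- The filter `m_ψ` of the candidate frame wavelet on the Cantor dyadic
group (`p = 2`):
`m_ψ(ω) = (−1)^{ω₀} conj(m(σω + 0.1)) Σ_{n'∈Λ∖Λ₁}|φ̂(σ(ω+n'))|²` on `Δ₂ + Λ`,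
`1` on `(Δ₁ ∩ η(V₀)ᶜ) + Λ` and `0` otherwise. -/
def mpsi (S : VilenkinSetting 2) (φ : Lp ℂ 2 S.μ) (m : Vil 2 → ℂ) (ω : Vil 2) : ℂ :=
  if ω ∈ S.Delta2 φ + (Hsub 2 : Set (Vil 2)) then
    (-1 : ℂ) ^ ((ω : ℤ → ZMod 2) 0).val *
      conj (m ((shiftMap 2).symm ω + dotEl 2 1)) *
      ((S.sumShift φ (LamO 2) ω).toReal : ℂ)
  else if ω ∈ (S.Delta1 φ ∩ (S.etaV0 φ)ᶜ) + (Hsub 2 : Set (Vil 2)) then 1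
  else 0

/-- `ψ̂ = m_ψ · (φ̂ ∘ σ)`, the Fourier transform of the candidate frame
wavelet. -/
def psiHat (S : VilenkinSetting 2) (φ : Lp ℂ 2 S.μ) (m : Vil 2 → ℂ) (ω : Vil 2) : ℂ :=
  S.mpsi φ m ω * S.F φ ((shiftMap 2).symm ω)

end VilenkinSetting

namespace CantorAux

open Set TopologicalSpace

abbrev V : Type := Vil 2

lemma zmod2_add_self : ∀ a : ZMod 2, a + a = 0 := by decide

lemma zmod2_ne_zero : ∀ a : ZMod 2, a ≠ 0 → a + 1 = 0 := by decide

lemma coe_add (x y : V) :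
    ((x + y : V) : ℤ → ZMod 2) = (x : ℤ → ZMod 2) + (y : ℤ → ZMod 2) := rfl

lemma coe_zero : ((0 : V) : ℤ → ZMod 2) = 0 := rfl

lemma add_self (x : V) : x + x = 0 := by
  apply Subtype.ext
  funext j
  show (x : ℤ → ZMod 2) j + (x : ℤ → ZMod 2) j = 0
  exact zmod2_add_self _

lemma addK (x y : V) : x + y + y = x := by
  rw [add_assoc, add_self, add_zero]

lemma mem_UsetL {x : V} {l : ℤ} :
    x ∈ UsetL 2 l ↔ ∀ j ≤ l, (x : ℤ → ZMod 2) j = 0 := Iff.rfl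

lemma UsetL_add {x y : V} {l : ℤ} (hx : x ∈ UsetL 2 l) (hy : y ∈ UsetL 2 l) :
    x + y ∈ UsetL 2 l := by
  intro j hj
  show (x : ℤ → ZMod 2) j + (y : ℤ → ZMod 2) j = 0
  rw [hx j hj, hy j hj, add_zero]

/-- The coset `x + U_l`, written as a preimage. -/
def cosetS (x : V) (l : ℤ) : Set V := (fun y => y + x) ⁻¹' UsetL 2 l

lemma mem_cosetS {y x : V} {l : ℤ} : y ∈ cosetS x l ↔ y + x ∈ UsetL 2 l := Iff.rfl

lemma image_eq_cosetS (x : V) (l : ℤ) : (x + ·) '' UsetL 2 l = cosetS x l := by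
  ext y
  constructor
  · rintro ⟨a, ha, rfl⟩
    show x + a + x ∈ UsetL 2 l
    rwa [add_comm x a, addK]
  · intro hy
    exact ⟨y + x, hy, by show x + (y + x) = y; rw [add_comm y x, ← add_assoc, add_self, zero_add]⟩

lemma isOpen_cosetS (x : V) (l : ℤ) : IsOpen (cosetS x l) :=
  TopologicalSpace.GenerateOpen.basic _ ⟨x, l, (image_eq_cosetS x l).symm⟩

instance : BorelSpace V := ⟨rfl⟩

lemma measurableSet_cosetS (x : V) (l : ℤ) : MeasurableSet (cosetS x l) :=
  (isOpen_cosetS x l).measurableSet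

lemma UsetL_eq_cosetS (l : ℤ) : UsetL 2 l = cosetS 0 l := by
  ext y; simp [mem_cosetS]

lemma measurableSet_UsetL (l : ℤ) : MeasurableSet (UsetL 2 l) := by
  rw [UsetL_eq_cosetS]; exact measurableSet_cosetS 0 l

lemma measurableSet_Uset : MeasurableSet (Uset 2) := measurableSet_UsetL 0

end CantorAux
namespace CantorAux

open Set TopologicalSpace

/-- Elements supported in the integer box `[k, l]`. -/
def boxSet (k l : ℤ) : Set V := {x | ∀ j, (j < k ∨ l < j) → (x : ℤ → ZMod 2) j = 0}

lemma finite_boxSet (k l : ℤ) : (boxSet k l).Finite := by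
  have : Finite ↥(boxSet k l) := by
    apply Finite.of_injective
      (fun x : ↥(boxSet k l) => fun j : Finset.Icc k l => ((x : V) : ℤ → ZMod 2) j)
    intro a b h
    apply Subtype.ext; apply Subtype.ext; funext j
    by_cases hj : k ≤ j ∧ j ≤ l
    · exact congrFun h ⟨j, Finset.mem_Icc.2 hj⟩
    · rw [a.2 j (by omega), b.2 j (by omega)]
  exact Set.toFinite _

/-- Elements supported in `(-∞, l]`. -/
def Dl (l : ℤ) : Set V := {x | ∀ j, l < j → (x : ℤ → ZMod 2) j = 0}

lemma countable_Dl (l : ℤ) : (Dl l).Countable := by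
  have hsub : Dl l ⊆ ⋃ k : ℤ, boxSet k l := by
    intro x hx
    obtain ⟨k, hk⟩ := x.2
    exact Set.mem_iUnion.2 ⟨k, fun j hj => hj.elim (hk j) (hx j)⟩
  exact (Set.countable_iUnion fun k => (finite_boxSet k l).countable).mono hsub

/-- Truncation to coordinates `≤ l`. -/
def trunc (l : ℤ) (x : V) : V :=
  ⟨fun j => if j ≤ l then (x : ℤ → ZMod 2) j else 0, by
    obtain ⟨k, hk⟩ := x.2
    exact ⟨k, fun j hj => by by_cases h : j ≤ l <;> simp [h, hk j hj]⟩⟩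

lemma trunc_coe (l : ℤ) (x : V) (j : ℤ) :
    ((trunc l x : V) : ℤ → ZMod 2) j = if j ≤ l then (x : ℤ → ZMod 2) j else 0 := rfl

lemma trunc_mem_Dl (l : ℤ) (x : V) : trunc l x ∈ Dl l :=
  fun j hj => if_neg (by omega)

lemma add_trunc_mem (x : V) (l : ℤ) : x + trunc l x ∈ UsetL 2 l := by
  intro j hj
  show (x : ℤ → ZMod 2) j + ((trunc l x : V) : ℤ → ZMod 2) j = 0
  rw [trunc_coe, if_pos hj]
  exact zmod2_add_self _

lemma cosetS_trunc (x : V) (l : ℤ) : cosetS x l = cosetS (trunc l x) l := by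
  ext y
  simp only [mem_cosetS, mem_UsetL]
  constructor <;> intro h j hj <;> have := h j hj <;>
    revert this <;>
    show (y : ℤ → ZMod 2) j + _ = 0 → (y : ℤ → ZMod 2) j + _ = 0 <;>
    rw [trunc_coe, if_pos hj] <;> exact id

/-- The (countable) family of all cosets. -/
def cosetFam : Set (Set V) := {s | ∃ x l, s = cosetS x l}

lemma countable_cosetFam : cosetFam.Countable := by
  have hsub : cosetFam ⊆ ⋃ l : ℤ, (fun x => cosetS x l) '' Dl l := by
    rintro s ⟨x, l, rfl⟩
    exact Set.mem_iUnion.2 ⟨l, ⟨trunc l x, trunc_mem_Dl l x, (cosetS_trunc x l).symm⟩⟩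
  exact (Set.countable_iUnion fun l => (countable_Dl l).image _).mono hsub

lemma cosetS_eq_of_mem {y x : V} {l : ℤ} (hy : y ∈ cosetS x l) :
    cosetS x l = cosetS y l := by
  ext z
  simp only [mem_cosetS] at *
  constructor
  · intro hz
    have := UsetL_add hz hy
    have hq : z + x + (y + x) = z + y := by
      have : z + x + (y + x) = x + x + (z + y) := by abel
      rw [this, add_self, zero_add]
    rwa [hq] at this
  · intro hz
    have := UsetL_add hz hy
    have hq : z + y + (y + x) = z + x := by
      have : z + y + (y + x) = y + y + (z + x) := by abel
      rw [this, add_self, zero_add]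
    rwa [hq] at this

lemma cosetS_inter_self (y : V) (l l' : ℤ) :
    cosetS y l ∩ cosetS y l' = cosetS y (max l l') := by
  ext z
  simp only [Set.mem_inter_iff, mem_cosetS, mem_UsetL]
  constructor
  · rintro ⟨h1, h2⟩ j hj
    rcases le_max_iff.1 hj with h | h
    exacts [h1 j h, h2 j h]
  · intro h
    exact ⟨fun j hj => h j (le_max_of_le_left hj), fun j hj => h j (le_max_of_le_right hj)⟩

lemma sInter_shape (f : Set (Set V)) (hf : f.Finite)
    (hsub : f ⊆ {s | ∃ (x : V) (l : ℤ), s = (x + ·) '' UsetL 2 l}) :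
    ⋂₀ f = univ ∨ ⋂₀ f = ∅ ∨ ⋂₀ f ∈ cosetFam := by
  refine Set.Finite.induction_on (motive := fun f _ => f ⊆ {s | ∃ (x : V) (l : ℤ), s = (x + ·) '' UsetL 2 l} → (⋂₀ f = univ ∨ ⋂₀ f = ∅ ∨ ⋂₀ f ∈ cosetFam)) f hf (fun _ => Or.inl Set.sInter_empty) ?_ hsub
  clear hsub
  intro a s _ _ ih hsub
  obtain ⟨x, l, hal⟩ := hsub (Set.mem_insert a s)
  have ha : a = cosetS x l := by rw [hal, image_eq_cosetS]
  rw [Set.sInter_insert, ha]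
  rcases ih (fun t ht => hsub (Set.mem_insert_of_mem a ht)) with h | h | ⟨x', l', h⟩
  · rw [h, Set.inter_univ]; right; right; exact ⟨x, l, rfl⟩
  · rw [h, Set.inter_empty]; right; left; rfl
  · rw [h]
    rcases Set.eq_empty_or_nonempty (cosetS x l ∩ cosetS x' l') with he | ⟨y, hy⟩
    · right; left; exact he
    · right; right
      rw [cosetS_eq_of_mem hy.1, cosetS_eq_of_mem hy.2, cosetS_inter_self]
      exact ⟨y, max l l', rfl⟩

lemma open_decomp {O : Set V} (hO : IsOpen O) :
    ∃ 𝔅 : Set (Set V), 𝔅.Countable ∧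
      (∀ b ∈ 𝔅, b = univ ∨ b = ∅ ∨ b ∈ cosetFam) ∧ O = ⋃₀ 𝔅 := by
  have hbasis := TopologicalSpace.isTopologicalBasis_of_subbasis
    (s := {s : Set V | ∃ (x : V) (l : ℤ), s = (x + ·) '' UsetL 2 l}) rfl
  obtain ⟨S, hS, hunion⟩ := hbasis.open_eq_sUnion hO
  have hshape : ∀ b ∈ S, b = univ ∨ b = ∅ ∨ b ∈ cosetFam := by
    intro b hb
    obtain ⟨fcol, ⟨hfin, hsub⟩, rfl⟩ := hS hb
    exact sInter_shape fcol hfin hsub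
  refine ⟨S, ?_, hshape, hunion⟩
  have : S ⊆ insert univ (insert ∅ cosetFam) := by
    intro b hb
    rcases hshape b hb with h | h | h
    · exact h ▸ Set.mem_insert _ _
    · exact Or.inr (h ▸ Set.mem_insert _ _)
    · exact Or.inr (Or.inr h)
  exact ((countable_cosetFam.insert ∅).insert univ).mono this

lemma measurable_of_cosets {X : Type*} [MeasurableSpace X] {f : X → V}
    (h : ∀ x l, MeasurableSet (f ⁻¹' cosetS x l)) : Measurable f := by
  have : Measurable[_, MeasurableSpace.generateFrom {s : Set V | IsOpen s}] f := by
    apply measurable_generateFrom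
    intro O hO
    obtain ⟨𝔅, hcnt, hshape, rfl⟩ := open_decomp hO
    rw [Set.preimage_sUnion]
    apply MeasurableSet.biUnion hcnt
    intro b hb
    rcases hshape b hb with rfl | rfl | ⟨x, l, rfl⟩
    · simp
    · simp
    · exact h x l
  exact this

end CantorAux
namespace CantorAux

open Set TopologicalSpace

/-- The inverse shift `σ`. -/
def sh : V → V := fun x => (shiftMap 2).symm x

lemma sh_coe (x : V) (j : ℤ) : ((sh x : V) : ℤ → ZMod 2) j = (x : ℤ → ZMod 2) (j - 1) := rfl

lemma shiftMap_coe (x : V) (j : ℤ) :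
    ((shiftMap 2 x : V) : ℤ → ZMod 2) j = (x : ℤ → ZMod 2) (j + 1) := rfl

lemma sh_add (x y : V) : sh (x + y) = sh x + sh y := map_add (shiftMap 2).symm x y

lemma measurable_sh : Measurable sh := by
  apply measurable_of_cosets
  intro x l
  have : sh ⁻¹' cosetS x l = cosetS (shiftMap 2 x) (l - 1) := by
    ext y
    simp only [Set.mem_preimage, mem_cosetS, mem_UsetL]
    constructor
    · intro h j hj
      have := h (j + 1) (by omega)
      revert this
      show ((sh y : V) : ℤ → ZMod 2) (j+1) + (x : ℤ → ZMod 2) (j+1) = 0 →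
        (y : ℤ → ZMod 2) j + ((shiftMap 2 x : V) : ℤ → ZMod 2) j = 0
      rw [sh_coe, shiftMap_coe, add_sub_cancel_right]
      exact id
    · intro h j hj
      have := h (j - 1) (by omega)
      revert this
      show (y : ℤ → ZMod 2) (j-1) + ((shiftMap 2 x : V) : ℤ → ZMod 2) (j-1) = 0 →
        ((sh y : V) : ℤ → ZMod 2) j + (x : ℤ → ZMod 2) j = 0
      rw [sh_coe, shiftMap_coe, sub_add_cancel]
      exact id
  rw [this]
  exact measurableSet_cosetS _ _

lemma measurable_add2 : Measurable (fun q : V × V => q.1 + q.2) := by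
  apply measurable_of_cosets
  intro x l
  have : (fun q : V × V => q.1 + q.2) ⁻¹' cosetS x l =
      ⋃ d : ↥(Dl l), (cosetS (d : V) l) ×ˢ (cosetS ((d : V) + x) l) := by
    ext ⟨a, b⟩
    simp only [Set.mem_preimage, mem_cosetS, Set.mem_iUnion, Set.mem_prod]
    constructor
    · intro h
      refine ⟨⟨trunc l a, trunc_mem_Dl l a⟩, add_trunc_mem a l, ?_⟩
      have h1 := UsetL_add h (add_trunc_mem a l)
      have hq : a + b + x + (a + trunc l a) = b + (trunc l a + x) := by
        have : a + b + x + (a + trunc l a) = a + a + (b + (trunc l a + x)) := by abel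
        rw [this, add_self, zero_add]
      rwa [hq] at h1
    · rintro ⟨⟨d, hd⟩, h1, h2⟩
      have h3 := UsetL_add h1 h2
      have hq : a + d + (b + (d + x)) = a + b + x := by
        have : a + d + (b + (d + x)) = d + d + (a + b + x) := by abel
        rw [this, add_self, zero_add]
      rwa [hq] at h3
  rw [this]
  haveI : Countable ↥(Dl l) := (countable_Dl l).to_subtype
  exact MeasurableSet.iUnion fun d =>
    (measurableSet_cosetS _ _).prod (measurableSet_cosetS _ _)

lemma Hsub_eq_Dl : (Hsub 2 : Set V) = Dl 0 := by
  ext x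
  exact ⟨fun h j hj => h j hj, fun h j hj => h j hj⟩

lemma countable_Hsub : ((Hsub 2 : Set V)).Countable := Hsub_eq_Dl ▸ countable_Dl 0

instance : Countable ↥(Hsub 2) := countable_Hsub.to_subtype

end CantorAux
namespace CantorAux

open Set MeasureTheory

variable (S : VilenkinSetting 2)

lemma nu_translate (g : V) {A : Set V} (hA : NullMeasurableSet A S.ν) :
    S.ν ((fun y => y + g) ⁻¹' A) = S.ν A :=
  (S.ν_inv g).measure_preimage hA

lemma measurable_addg (g : V) : Measurable (fun y : V => y + g) := by
  apply measurable_of_cosets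
  intro x l
  have : (fun y : V => y + g) ⁻¹' cosetS x l = cosetS (x + g) l := by
    ext y
    simp only [Set.mem_preimage, mem_cosetS]
    rw [show y + g + x = y + (x + g) by abel]
  rw [this]
  exact measurableSet_cosetS _ _

/-- The pushforward of `ν` under `σ`, i.e. `A ↦ ν (ρ A)`. -/
def lam : Measure V := Measure.map sh S.ν

lemma lam_apply {A : Set V} (hA : MeasurableSet A) : lam S A = S.ν (sh ⁻¹' A) :=
  Measure.map_apply measurable_sh hA

lemma sh_apply_shift (g y : V) : sh (y + shiftMap 2 g) = sh y + g := by
  rw [sh_add]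
  show sh y + (shiftMap 2).symm (shiftMap 2 g) = sh y + g
  rw [AddEquiv.symm_apply_apply]

lemma lam_translate (g : V) {A : Set V} (hA : MeasurableSet A) :
    lam S ((fun y => y + g) ⁻¹' A) = lam S A := by
  rw [lam_apply S ((measurable_addg g) hA), lam_apply S hA]
  have hset : sh ⁻¹' ((fun y => y + g) ⁻¹' A) =
      (fun y => y + shiftMap 2 g) ⁻¹' (sh ⁻¹' A) := by
    ext y
    simp only [Set.mem_preimage]
    rw [sh_apply_shift]
  rw [hset]
  exact nu_translate S _ (measurable_sh hA).nullMeasurableSet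

lemma mem_Uset {x : V} : x ∈ Uset 2 ↔ ∀ j ≤ (0:ℤ), (x : ℤ → ZMod 2) j = 0 := Iff.rfl

lemma Uset_add {x y : V} (hx : x ∈ Uset 2) (hy : y ∈ Uset 2) : x + y ∈ Uset 2 :=
  UsetL_add hx hy

/-- The element with coordinate `1` in position `0`. -/
def e0 : V := ⟨fun j => if j = 0 then 1 else 0, ⟨0, fun j hj => if_neg (by omega)⟩⟩

lemma sh_preimage_Uset : sh ⁻¹' Uset 2 = UsetL 2 (-1) := by
  ext y
  simp only [Set.mem_preimage]
  constructor
  · intro h j hj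
    have := h (j + 1) (by omega)
    rwa [sh_coe, add_sub_cancel_right] at this
  · intro h j hj
    rw [sh_coe]
    exact h (j - 1) (by omega)

lemma UsetL_neg1_subset : UsetL 2 (-1) ⊆ Uset 2 ∪ (fun y => y + e0) ⁻¹' Uset 2 := by
  intro x hx
  by_cases h0 : (x : ℤ → ZMod 2) 0 = 0
  · left
    intro j hj
    rcases eq_or_lt_of_le hj with rfl | h
    · exact h0
    · exact hx j (by omega)
  · right
    intro j hj
    show (x : ℤ → ZMod 2) j + (e0 : ℤ → ZMod 2) j = 0
    rcases eq_or_lt_of_le hj with rfl | h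
    · show (x : ℤ → ZMod 2) 0 + (if (0:ℤ) = 0 then 1 else 0) = 0
      rw [if_pos rfl]
      exact zmod2_ne_zero _ h0
    · show (x : ℤ → ZMod 2) j + (if j = 0 then 1 else 0) = 0
      rw [if_neg (by omega), add_zero]
      exact hx j (by omega)

lemma nu_UsetL_neg1 : S.ν (UsetL 2 (-1)) ≤ 2 := by
  refine le_trans (measure_mono UsetL_neg1_subset) (le_trans (measure_union_le _ _) ?_)
  rw [S.ν_U, nu_translate S e0 measurableSet_Uset.nullMeasurableSet, S.ν_U]
  norm_num

lemma lam_null_of_null {C : Set V} (hC : MeasurableSet C) (hCU : C ⊆ Uset 2)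
    (h0 : S.ν C = 0) : lam S C = 0 := by
  set α := S.ν.restrict (Uset 2) with hα
  set β := (lam S).restrict (Uset 2) with hβ
  haveI : IsFiniteMeasure α := ⟨by
    rw [hα, Measure.restrict_apply_univ, S.ν_U]; exact ENNReal.one_lt_top⟩
  haveI : IsFiniteMeasure β := ⟨by
    rw [hβ, Measure.restrict_apply_univ, lam_apply S measurableSet_Uset,
      sh_preimage_Uset]
    exact lt_of_le_of_lt (nu_UsetL_neg1 S) (by norm_num)⟩
  have hmeas : Measurable (Function.uncurry fun x y : V => C.indicator (1 : V → ℝ≥0∞) (x + y)) :=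
    ((measurable_const.indicator hC)).comp measurable_add2
  have swap := lintegral_lintegral_swap (μ := α) (ν := β) hmeas.aemeasurable
  -- left side equals `lam S C`
  have hL : ∫⁻ x, ∫⁻ y, C.indicator (1 : V → ℝ≥0∞) (x + y) ∂β ∂α = lam S C := by
    have step : ∀ x ∈ Uset 2,
        (∫⁻ y, C.indicator (1 : V → ℝ≥0∞) (x + y) ∂β) = lam S C := by
      intro x hx
      have hpre : MeasurableSet ((fun y : V => y + x) ⁻¹' C) := (measurable_addg x) hC
      have hrw : (fun y => C.indicator (1 : V → ℝ≥0∞) (x + y)) =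
          ((fun y : V => y + x) ⁻¹' C).indicator (1 : V → ℝ≥0∞) := by
        funext y
        simp only [Set.indicator_apply, Set.mem_preimage, add_comm x y, Pi.one_apply]
      rw [hrw, lintegral_indicator_one hpre, hβ, Measure.restrict_apply hpre]
      have hsub : (fun y : V => y + x) ⁻¹' C ⊆ Uset 2 := by
        intro y hy
        have h1 : y + x ∈ Uset 2 := hCU hy
        have := Uset_add h1 hx
        rwa [addK] at this
      rw [Set.inter_eq_left.mpr hsub]
      exact lam_translate S x hC
    have : ∫⁻ x, ∫⁻ y, C.indicator (1 : V → ℝ≥0∞) (x + y) ∂β ∂α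
        = ∫⁻ _, lam S C ∂α := by
      refine lintegral_congr_ae ?_
      refine (ae_restrict_iff' measurableSet_Uset).2 (Filter.Eventually.of_forall ?_)
      exact step
    rw [this, lintegral_const, hα, Measure.restrict_apply_univ, S.ν_U, mul_one]
  -- right side equals `0`
  have hR : ∫⁻ y, ∫⁻ x, C.indicator (1 : V → ℝ≥0∞) (x + y) ∂α ∂β = 0 := by
    have step : ∀ y : V, (∫⁻ x, C.indicator (1 : V → ℝ≥0∞) (x + y) ∂α) = 0 := by
      intro y
      have hpre : MeasurableSet ((fun x : V => x + y) ⁻¹' C) := (measurable_addg y) hC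
      have hrw : (fun x => C.indicator (1 : V → ℝ≥0∞) (x + y)) =
          ((fun x : V => x + y) ⁻¹' C).indicator (1 : V → ℝ≥0∞) := by
        funext x
        simp only [Set.indicator_apply, Set.mem_preimage, Pi.one_apply]
      rw [hrw, lintegral_indicator_one hpre, hα, Measure.restrict_apply hpre]
      refine le_antisymm (le_trans (measure_mono Set.inter_subset_left) ?_) zero_le
      rw [nu_translate S y hC.nullMeasurableSet, h0]
    simp only [step, lintegral_zero]
  rw [hL, hR] at swap
  exact swap

lemma sh_mem_Uset {y : V} (hy : y ∈ Uset 2) : sh y ∈ Uset 2 := by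
  intro j hj
  rw [sh_coe]
  exact hy (j - 1) (by omega)

/-- Quasi-invariance of `ν` under the dilation `ρ`: preimages under `σ` of
null sets are null. -/
lemma null_sh_preimage {B : Set V} (hB : MeasurableSet B) (h0 : S.ν B = 0) :
    S.ν (sh ⁻¹' B) = 0 := by
  have cover : sh ⁻¹' B ⊆
      ⋃ h : ↥(Hsub 2), (sh ⁻¹' B) ∩ ((fun y => y + (h : V)) ⁻¹' Uset 2) := by
    intro y hy
    have hmem : trunc 0 y ∈ Hsub 2 := fun j hj => if_neg (by omega)
    exact Set.mem_iUnion.2 ⟨⟨trunc 0 y, hmem⟩, hy, add_trunc_mem y 0⟩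
  refine measure_mono_null cover (measure_iUnion_null fun h => ?_)
  set g : V := (h : V)
  set B' : Set V := (fun y => y + sh g) ⁻¹' B with hB'def
  have hB' : MeasurableSet B' := (measurable_addg (sh g)) hB
  have hB'0 : S.ν B' = 0 := by
    rw [hB'def, nu_translate S (sh g) hB.nullMeasurableSet]; exact h0
  have hpiece : (sh ⁻¹' B) ∩ ((fun y => y + g) ⁻¹' Uset 2) =
      (fun y => y + g) ⁻¹' ((sh ⁻¹' B') ∩ Uset 2) := by
    ext y
    simp only [Set.mem_inter_iff, Set.mem_preimage, hB'def]
    have key : sh (y + g) + sh g = sh y := by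
      rw [← sh_add, addK]
    constructor
    · rintro ⟨h1, h2⟩
      exact ⟨by rwa [key], h2⟩
    · rintro ⟨h1, h2⟩
      rw [key] at h1
      exact ⟨h1, h2⟩
  rw [hpiece, nu_translate S g ((measurable_sh hB').inter measurableSet_Uset).nullMeasurableSet]
  have hsub : (sh ⁻¹' B') ∩ Uset 2 ⊆ sh ⁻¹' (B' ∩ Uset 2) := by
    rintro y ⟨h1, h2⟩
    exact ⟨h1, sh_mem_Uset h2⟩
  refine measure_mono_null hsub ?_
  have := lam_null_of_null S (hB'.inter measurableSet_Uset) Set.inter_subset_right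
    (measure_mono_null Set.inter_subset_left hB'0)
  rwa [lam_apply S (hB'.inter measurableSet_Uset)] at this

end CantorAux
/-- (Cantor dyadic group, `p = 2`.) If
`E_m = {ω ∈ Δ₂ : m(σω) = m(σω+0.1) = 0}` is null and `m'` is another
`Λ`-periodic filter in `L²(D)` with `φ̂(ρω) = m'(ω)φ̂(ω)` a.e., then
`E_{m'}` is null as well. -/
theorem blocked_set_null_independent_of_filter
    (S : VilenkinSetting 2) (V : ℤ → Submodule ℂ (Lp ℂ 2 S.μ))
    (φ : Lp ℂ 2 S.μ) (hV : S.IsFMRA V φ)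
    (m : Vil 2 → ℂ) (hm : S.IsFilter m)
    (href : ∀ᵐ ω ∂S.ν, S.F φ (shiftMap 2 ω) = m ω * S.F φ ω)
    (hE : S.ν (S.blockedSet φ m) = 0)
    (m' : Vil 2 → ℂ) (hm' : S.IsFilter m')
    (href' : ∀ᵐ ω ∂S.ν, S.F φ (shiftMap 2 ω) = m' ω * S.F φ ω) :
    S.ν (S.blockedSet φ m') = 0 := by
  classical
  open CantorAux in
  -- the joint exceptional set of the two refinement equations
  set N : Set (Vil 2) := {ω | ¬ ((S.F φ) (shiftMap 2 ω) = m ω * (S.F φ) ω ∧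
      (S.F φ) (shiftMap 2 ω) = m' ω * (S.F φ) ω)} with hNdef
  have hN : S.ν N = 0 := MeasureTheory.ae_iff.mp (href.and href')
  set N' : Set (Vil 2) := MeasureTheory.toMeasurable S.ν N with hN'def
  have hNsub : N ⊆ N' := MeasureTheory.subset_toMeasurable _ _
  have hN'meas : MeasurableSet N' := MeasureTheory.measurableSet_toMeasurable _ _
  have hN' : S.ν N' = 0 := by
    rw [hN'def, MeasureTheory.measure_toMeasurable]; exact hN
  -- the translated dilated bad sets
  have hbad : ∀ n : Vil 2, S.ν ((fun ω : Vil 2 => (shiftMap 2).symm (ω + n)) ⁻¹' N') = 0 := by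
    intro n
    have heq : (fun ω : Vil 2 => (shiftMap 2).symm (ω + n)) ⁻¹' N' =
        (fun ω : Vil 2 => ω + n) ⁻¹' (CantorAux.sh ⁻¹' N') := rfl
    rw [heq, CantorAux.nu_translate S n
      (CantorAux.measurable_sh hN'meas).nullMeasurableSet]
    exact CantorAux.null_sh_preimage S hN'meas hN'
  -- main inclusion
  have hincl : S.blockedSet φ m' ⊆ S.blockedSet φ m ∪
      ⋃ n : ↥(Hsub 2), (fun ω : Vil 2 => (shiftMap 2).symm (ω + (n : Vil 2))) ⁻¹' N' := by
    intro ω hω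
    obtain ⟨hΔ, hm'1, hm'2⟩ := hω
    by_cases hbadω : ω ∈ ⋃ n : ↥(Hsub 2),
        (fun ω : Vil 2 => (shiftMap 2).symm (ω + (n : Vil 2))) ⁻¹' N'
    · exact Or.inr hbadω
    · left
      rw [Set.mem_iUnion] at hbadω
      push_neg at hbadω
      have hrel : ∀ n : Vil 2, n ∈ Hsub 2 →
          (S.F φ) (ω + n) = m ((shiftMap 2).symm (ω + n)) *
            (S.F φ) ((shiftMap 2).symm (ω + n)) ∧
          (S.F φ) (ω + n) = m' ((shiftMap 2).symm (ω + n)) *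
            (S.F φ) ((shiftMap 2).symm (ω + n)) := by
        intro n hn
        have h1 : (shiftMap 2).symm (ω + n) ∉ N' := hbadω ⟨n, hn⟩
        have h2 : (shiftMap 2).symm (ω + n) ∉ N := fun hc => h1 (hNsub hc)
        have h3 := not_not.mp h2
        rwa [AddEquiv.apply_symm_apply] at h3
      obtain ⟨hΔU, hΔ1, hΔ2⟩ := hΔ
      -- first coordinate : m (σ ω) = 0
      obtain ⟨n₁, hn₁⟩ : ∃ n : ↥(Lam1 2),
          (S.F φ) ((shiftMap 2).symm (ω + (n : Vil 2))) ≠ 0 := by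
        by_contra hcon
        push_neg at hcon
        exact hΔ1 (ENNReal.tsum_eq_zero.mpr fun n => by
          rw [hcon n]; simp)
      have hmem1 : (n₁ : Vil 2) ∈ Hsub 2 := n₁.2.1
      have hσ1 : (shiftMap 2).symm (n₁ : Vil 2) ∈ Hsub 2 := n₁.2.2
      have hsplit1 : (shiftMap 2).symm (ω + (n₁ : Vil 2)) =
          (shiftMap 2).symm ω + (shiftMap 2).symm (n₁ : Vil 2) :=
        map_add (shiftMap 2).symm ω (n₁ : Vil 2)
      have hper : m ((shiftMap 2).symm (ω + (n₁ : Vil 2))) = m ((shiftMap 2).symm ω) := by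
        rw [hsplit1]; exact hm.1 _ _ hσ1
      have hper' : m' ((shiftMap 2).symm (ω + (n₁ : Vil 2))) = m' ((shiftMap 2).symm ω) := by
        rw [hsplit1]; exact hm'.1 _ _ hσ1
      obtain ⟨he1, he1'⟩ := hrel (n₁ : Vil 2) hmem1
      rw [hper'] at he1'
      rw [hper] at he1
      rw [hm'1, zero_mul] at he1'
      rw [he1'] at he1
      have hmσ : m ((shiftMap 2).symm ω) = 0 := by
        rcases mul_eq_zero.mp he1.symm with h | h
        · exact h
        · exact absurd h hn₁
      -- second coordinate : m (σ ω + 0.1) = 0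
      obtain ⟨n₂, hn₂⟩ : ∃ n : ↥(LamO 2),
          (S.F φ) ((shiftMap 2).symm (ω + (n : Vil 2))) ≠ 0 := by
        by_contra hcon
        push_neg at hcon
        exact hΔ2 (ENNReal.tsum_eq_zero.mpr fun n => by
          rw [hcon n]; simp)
      have hmem2 : (n₂ : Vil 2) ∈ Hsub 2 := n₂.2.1
      have hσ2 : (shiftMap 2).symm (n₂ : Vil 2) ∉ Hsub 2 :=
        fun hs => n₂.2.2 ⟨hmem2, hs⟩
      -- the zero-coordinate of n₂ is nonzero
      have hn20 : ((n₂ : Vil 2) : ℤ → ZMod 2) 0 ≠ 0 := by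
        intro hc
        apply hσ2
        intro j hj
        show ((n₂ : Vil 2) : ℤ → ZMod 2) (j - 1) = 0
        rcases eq_or_lt_of_le (by omega : (1:ℤ) ≤ j) with rfl | h
        · simpa using hc
        · exact hmem2 (j - 1) (by omega)
      set g : Vil 2 := (shiftMap 2).symm (n₂ : Vil 2) + dotEl 2 1 with hgdef
      have hg : g ∈ Hsub 2 := by
        intro j hj
        show ((shiftMap 2).symm (n₂ : Vil 2) : ℤ → ZMod 2) j
            + ((dotEl 2 1 : Vil 2) : ℤ → ZMod 2) j = 0
        rcases eq_or_lt_of_le (by omega : (1:ℤ) ≤ j) with rfl | h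
        · show ((n₂ : Vil 2) : ℤ → ZMod 2) 0 + (if (1:ℤ) = 1 then 1 else 0) = 0
          rw [if_pos rfl]
          exact CantorAux.zmod2_ne_zero _ hn20
        · show ((n₂ : Vil 2) : ℤ → ZMod 2) (j - 1) + (if j = 1 then 1 else 0) = 0
          rw [if_neg (by omega), add_zero]
          exact hmem2 (j - 1) (by omega)
      have hsplit2 : (shiftMap 2).symm (ω + (n₂ : Vil 2)) =
          ((shiftMap 2).symm ω + dotEl 2 1) + g := by
        rw [map_add (shiftMap 2).symm ω (n₂ : Vil 2), hgdef]
        have : ((shiftMap 2).symm ω + dotEl 2 1) +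
            ((shiftMap 2).symm (n₂ : Vil 2) + dotEl 2 1) =
            dotEl 2 1 + dotEl 2 1 +
              ((shiftMap 2).symm ω + (shiftMap 2).symm (n₂ : Vil 2)) := by abel
        rw [this, CantorAux.add_self, zero_add]
      have hper2 : m ((shiftMap 2).symm (ω + (n₂ : Vil 2))) =
          m ((shiftMap 2).symm ω + dotEl 2 1) := by
        rw [hsplit2]; exact hm.1 _ _ hg
      have hper2' : m' ((shiftMap 2).symm (ω + (n₂ : Vil 2))) =
          m' ((shiftMap 2).symm ω + dotEl 2 1) := by
        rw [hsplit2]; exact hm'.1 _ _ hg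
      obtain ⟨he2, he2'⟩ := hrel (n₂ : Vil 2) hmem2
      rw [hper2'] at he2'
      rw [hper2] at he2
      rw [hm'2, zero_mul] at he2'
      rw [he2'] at he2
      have hmσ2 : m ((shiftMap 2).symm ω + dotEl 2 1) = 0 := by
        rcases mul_eq_zero.mp he2.symm with h | h
        · exact h
        · exact absurd h hn₂
      exact ⟨⟨hΔU, hΔ1, hΔ2⟩, hmσ, hmσ2⟩
  exact MeasureTheory.measure_mono_null hincl
    (MeasureTheory.measure_union_null hE
      (MeasureTheory.measure_iUnion_null fun n => hbad (n : Vil 2)))
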